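/- (Differentiation under the integral sign for totally monotone-type integrands.) Fix n ∈ ℤ⁺ and let g: ℝⁿ × ℂ → ℂ be such that for each fixed x ∈ ℝⁿ, u ↦ g(x,u) is a real entire function, g(x,u) ≥ 0 for all (x,u) ∈ ℝⁿ × ℝ⁺, and either (−1)^l ∂^l g/∂u^l (x,t) ≥ 0 for all (l,t) ∈ ℕ × ℝ⁺ or ∂^l g/∂u^l (x,t) ≥ 0 for all (l,t) ∈ ℕ × ℝ⁺. If g(·,u) is Lebesgue integrable on ℝⁿ for every u ∈ ℝ⁺, then T(t) = ∫_{ℝⁿ} g(x,t) dx is twice differentiable on ℝ⁺ and T^{(l)}(t) = ∫_{ℝⁿ} ∂^l g/∂u^l (x,t) dx for l ∈ {1,2}. -/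

import Mathlib

open MeasureTheory Filter Topology Real

noncomputable section

private lemma aux_mvt (h h' : ℝ → ℝ) (hd : ∀ u, HasDerivAt h (h' u) u) {p q : ℝ}
    (hpq : p < q) : ∃ c ∈ Set.Ioo p q, h q - h p = h' c * (q - p) := by
  obtain ⟨c, hc, hc'⟩ := exists_hasDerivAt_eq_slope h h' hpq
    (fun u _ => (hd u).continuousAt.continuousWithinAt) (fun u _ => hd u)
  exact ⟨c, hc, by rw [hc', div_mul_cancel₀ _ (sub_ne_zero.mpr hpq.ne')]⟩

private lemma aux_mono (h h' : ℝ → ℝ) (hd : ∀ u, HasDerivAt h (h' u) u)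
    (hp : ∀ u : ℝ, 0 < u → 0 ≤ h' u) {p q : ℝ} (hp0 : 0 < p) (hpq : p ≤ q) :
    h p ≤ h q := by
  rcases eq_or_lt_of_le hpq with rfl | hlt
  · exact le_refl _
  obtain ⟨c, hc, e⟩ := aux_mvt h h' hd hlt
  nlinarith [hp c (hp0.trans hc.1), hc.1, hc.2]

private lemma aux_anti (h h' : ℝ → ℝ) (hd : ∀ u, HasDerivAt h (h' u) u)
    (hp : ∀ u : ℝ, 0 < u → h' u ≤ 0) {p q : ℝ} (hp0 : 0 < p) (hpq : p ≤ q) :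
    h q ≤ h p := by
  have := aux_mono (fun s => -h s) (fun s => -h' s) (fun u => (hd u).neg)
    (fun u hu => by simpa using neg_nonneg.mpr (hp u hu)) hp0 hpq
  simpa using this

private lemma aux_step (h h' h'' : ℝ → ℝ) (hd : ∀ u, HasDerivAt h (h' u) u)
    (hd' : ∀ u, HasDerivAt h' (h'' u) u)
    (h0 : ∀ u : ℝ, 0 < u → 0 ≤ h u) (h2 : ∀ u : ℝ, 0 < u → 0 ≤ h'' u)
    {q : ℝ} (hq : 0 < q) : h' q ≤ h (q + 1) := by
  obtain ⟨c, hc, e⟩ := aux_mvt h h' hd (show q < q + 1 by linarith)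
  have h1 : h' q ≤ h' c := aux_mono h' h'' hd' h2 hq hc.1.le
  have h3 := h0 q hq
  nlinarith [e]

private lemma aux_alt (h h' h'' : ℝ → ℝ) (hd : ∀ u, HasDerivAt h (h' u) u)
    (hd' : ∀ u, HasDerivAt h' (h'' u) u)
    (h0 : ∀ u : ℝ, 0 < u → 0 ≤ h u) (h2 : ∀ u : ℝ, 0 < u → 0 ≤ h'' u)
    {p : ℝ} (hp : 0 < p) : (-h' p) * p ≤ 2 * h (p / 2) := by
  obtain ⟨c, hc, e⟩ := aux_mvt h h' hd (show p / 2 < p by linarith)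
  have hc2 : h' c ≤ h' p := aux_mono h' h'' hd' h2 (by linarith [hc.1]) hc.2.le
  have h3 := h0 p hp
  have h4 := h0 (p / 2) (by linarith)
  nlinarith [e, mul_le_mul_of_nonneg_right hc2 (show (0:ℝ) ≤ p / 2 by linarith)]

private lemma aux_key (F : ℕ → ℝ → ℝ)
    (hd : ∀ l (u : ℝ), HasDerivAt (F l) (F (l + 1) u) u)
    (h0 : ∀ u : ℝ, 0 < u → 0 ≤ F 0 u)
    (hsgn : (∀ (l : ℕ) (u : ℝ), 0 < u → 0 ≤ (-1) ^ l * F l u) ∨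
            (∀ (l : ℕ) (u : ℝ), 0 < u → 0 ≤ F l u))
    {a b : ℝ} (ha : 0 < a) (hab : a ≤ b) :
    (∀ u ∈ Set.Icc a b, |F 1 u| ≤ F 0 (b + 1) + 2 / a * F 0 (a / 2)) ∧
    (∀ u ∈ Set.Icc a b, |F 2 u| ≤ F 0 (b + 2) + 8 / (a * a) * F 0 (a / 4)) := by
  have hb : 0 < b := lt_of_lt_of_le ha hab
  rcases hsgn with halt | hpos
  · -- alternating signs
    have p1 : ∀ u : ℝ, 0 < u → F 1 u ≤ 0 := fun u hu => by
      have := halt 1 u hu; simp at this; linarith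
    have p2 : ∀ u : ℝ, 0 < u → 0 ≤ F 2 u := fun u hu => by
      have := halt 2 u hu; simp at this; linarith
    have p3 : ∀ u : ℝ, 0 < u → F 3 u ≤ 0 := fun u hu => by
      have := halt 3 u hu; rw [show ((-1:ℝ)^3) = -1 by norm_num] at this; linarith
    -- -F1 p ≤ 2 F0(p/2) / p for all p > 0
    have key1 : ∀ p : ℝ, 0 < p → (-F 1 p) * p ≤ 2 * F 0 (p / 2) :=
      fun p hp => aux_alt (F 0) (F 1) (F 2) (hd 0) (hd 1) h0 p2 hp
    constructor
    · intro u hu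
      have hu0 : 0 < u := lt_of_lt_of_le ha hu.1
      have hb1 : 0 ≤ F 0 (b + 1) := h0 _ (by linarith)
      have hm : F 1 a ≤ F 1 u := aux_mono (F 1) (F 2) (hd 1) p2 ha hu.1
      have hk := key1 a ha
      have : -F 1 a ≤ 2 / a * F 0 (a / 2) := by
        rw [div_mul_eq_mul_div, le_div_iff₀ ha]; nlinarith
      rw [abs_of_nonpos (p1 u hu0)]
      linarith
    · intro u hu
      have hu0 : 0 < u := lt_of_lt_of_le ha hu.1
      have hb2 : 0 ≤ F 0 (b + 2) := h0 _ (by linarith)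
      have hm : F 2 u ≤ F 2 a := aux_anti (F 2) (F 3) (hd 2) p3 ha hu.1
      -- F2 a * (a/2) ≤ -F1 (a/2)
      obtain ⟨c, hc, e⟩ := aux_mvt (F 1) (F 2) (hd 1) (show a / 2 < a by linarith)
      have hcc : F 2 a ≤ F 2 c := aux_anti (F 2) (F 3) (hd 2) p3 (by linarith [hc.1]) hc.2.le
      have hF1a : F 1 a ≤ 0 := p1 a ha
      have step1 : F 2 a * (a / 2) ≤ -F 1 (a / 2) := by nlinarith [e]
      have step2 := key1 (a / 2) (by linarith)
      -- (-F1 (a/2)) * (a/2) ≤ 2 * F 0 (a/4)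
      have ha4 : a / 2 / 2 = a / 4 := by ring
      rw [ha4] at step2
      have : F 2 a ≤ 8 / (a * a) * F 0 (a / 4) := by
        rw [div_mul_eq_mul_div, le_div_iff₀ (by positivity)]
        nlinarith [mul_le_mul_of_nonneg_right step1 (show (0:ℝ) ≤ a / 2 by linarith)]
      rw [abs_of_nonneg (p2 u hu0)]
      linarith
  · -- all derivatives nonnegative
    have q1 : ∀ u : ℝ, 0 < u → 0 ≤ F 1 u := fun u hu => hpos 1 u hu
    have q2 : ∀ u : ℝ, 0 < u → 0 ≤ F 2 u := fun u hu => hpos 2 u hu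
    have q3 : ∀ u : ℝ, 0 < u → 0 ≤ F 3 u := fun u hu => hpos 3 u hu
    constructor
    · intro u hu
      have hu0 : 0 < u := lt_of_lt_of_le ha hu.1
      have h1 : F 1 u ≤ F 1 b := aux_mono (F 1) (F 2) (hd 1) q2 hu0 hu.2
      have h2 : F 1 b ≤ F 0 (b + 1) := aux_step (F 0) (F 1) (F 2) (hd 0) (hd 1) h0 q2 hb
      have h3 : 0 ≤ F 0 (a / 2) := h0 _ (by linarith)
      have h4 : 0 ≤ 2 / a * F 0 (a / 2) := by positivity
      rw [abs_of_nonneg (q1 u hu0)]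
      linarith
    · intro u hu
      have hu0 : 0 < u := lt_of_lt_of_le ha hu.1
      have h1 : F 2 u ≤ F 2 b := aux_mono (F 2) (F 3) (hd 2) q3 hu0 hu.2
      have h2 : F 2 b ≤ F 1 (b + 1) := aux_step (F 1) (F 2) (F 3) (hd 1) (hd 2) q1 q3 hb
      have h3 : F 1 (b + 1) ≤ F 0 (b + 2) := by
        have := aux_step (F 0) (F 1) (F 2) (hd 0) (hd 1) h0 q2 (show (0:ℝ) < b + 1 by linarith)
        convert this using 2
        ring
      have h4 : 0 ≤ F 0 (a / 4) := h0 _ (by linarith)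
      have h5 : 0 ≤ 8 / (a * a) * F 0 (a / 4) := by positivity
      rw [abs_of_nonneg (q2 u hu0)]
      linarith

private lemma aux_meas {α : Type*} [MeasurableSpace α] {μ : Measure α}
    (F : α → ℕ → ℝ → ℝ)
    (hd : ∀ x l (u : ℝ), HasDerivAt (F x l) (F x (l + 1) u) u)
    (h0 : ∀ u : ℝ, 0 < u → AEStronglyMeasurable (fun x => F x 0 u) μ) :
    ∀ l (u : ℝ), 0 < u → AEStronglyMeasurable (fun x => F x l u) μ := by
  intro l
  induction l with
  | zero => exact h0
  | succ l ih =>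
    intro u hu
    have hs : Tendsto (fun k : ℕ => u + 1 / ((k : ℝ) + 1)) atTop (𝓝[≠] u) := by
      apply tendsto_nhdsWithin_of_tendsto_nhds_of_eventually_within
      · have h := tendsto_one_div_add_atTop_nhds_zero_nat (𝕜 := ℝ)
        have h2 := (tendsto_const_nhds (x := u) (f := atTop (α := ℕ))).add h
        simpa using h2
      · refine Eventually.of_forall fun k => ?_
        have hpos : (0:ℝ) < 1 / ((k:ℝ) + 1) := by positivity
        simp only [Set.mem_compl_iff, Set.mem_singleton_iff]
        intro h; nlinarith
    refine aestronglyMeasurable_of_tendsto_ae atTop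
      (f := fun (k : ℕ) x => (F x l (u + 1 / ((k:ℝ) + 1)) - F x l u) * ((k:ℝ) + 1)) ?_ ?_
    · intro k
      exact ((ih _ (by positivity)).sub (ih u hu)).mul_const _
    · refine Eventually.of_forall fun x => ?_
      have ht := (hasDerivAt_iff_tendsto_slope.mp (hd x l u)).comp hs
      refine ht.congr fun k => ?_
      have hk : ((k:ℝ) + 1) ≠ 0 := by positivity
      show slope (F x l) u (u + 1 / ((k:ℝ) + 1)) = _
      rw [slope_def_field, add_sub_cancel_left]
      field_simp

private lemma aux_entire (f : ℂ → ℂ) (hf : Differentiable ℂ f) :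
    ∀ l, Differentiable ℂ (iteratedDeriv l f) := by
  intro l
  induction l with
  | zero => simpa using hf
  | succ l ih =>
    rw [iteratedDeriv_succ]
    have hA : AnalyticOnNhd ℂ (iteratedDeriv l f) Set.univ := fun z _ => ih.analyticAt z
    exact fun z => ((hA.deriv) z (Set.mem_univ z)).differentiableAt

private lemma aux_hd (f : ℂ → ℂ) (hf : Differentiable ℂ f) (l : ℕ) (u : ℝ) :
    HasDerivAt (fun s : ℝ => (iteratedDeriv l f s).re) ((iteratedDeriv (l + 1) f u).re) u := by
  have h1 : HasDerivAt (iteratedDeriv l f) (iteratedDeriv (l + 1) f u) u := by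
    rw [iteratedDeriv_succ]
    exact (aux_entire f hf l u).hasDerivAt
  exact h1.real_of_complex

/-- **Differentiation under the integral sign for totally monotone-type
integrands** (Lemma 2, part (i)).  `g(x, ·)` is a real entire function for each
`x`, nonnegative on `ℝⁿ × ℝ⁺`, with all `u`-derivatives on `ℝ⁺` either all
nonnegative or alternating in sign, and `g(·, u)` integrable for each `u > 0`.
Then `T(t) = ∫ g(x,t) dx` is twice differentiable on `ℝ⁺` with
`T^{(l)}(t) = ∫ ∂^l g/∂u^l (x,t) dx` for `l ∈ {1,2}`. -/
theorem differentiation_under_integral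
    (n : ℕ) (g : (Fin n → ℝ) → ℂ → ℂ)
    -- `g(x, ·)` is entire for each fixed `x`
    (hent : ∀ x, Differentiable ℂ (g x))
    -- ... and real on the real axis
    (hreal : ∀ (x) (t : ℝ), (g x t).im = 0)
    -- `g ≥ 0` on `ℝⁿ × ℝ⁺`
    (hpos : ∀ (x) (t : ℝ), 0 < t → 0 ≤ (g x (t : ℂ)).re)
    -- all derivatives on `ℝ⁺` alternate in sign or are all nonnegative
    (hsign : ∀ x,
      (∀ (l : ℕ) (t : ℝ), 0 < t → 0 ≤ ((-1) ^ l * iteratedDeriv l (g x) (t : ℂ)).re) ∨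
      (∀ (l : ℕ) (t : ℝ), 0 < t → 0 ≤ (iteratedDeriv l (g x) (t : ℂ)).re))
    -- `g(·, u)` is Lebesgue integrable for every `u > 0`
    (hint : ∀ u : ℝ, 0 < u → Integrable fun x => (g x (u : ℂ)).re) :
    ∀ t : ℝ, 0 < t →
      HasDerivAt (fun u : ℝ => ∫ x, (g x (u : ℂ)).re)
        (∫ x, (iteratedDeriv 1 (g x) (t : ℂ)).re) t ∧
      HasDerivAt (deriv fun u : ℝ => ∫ x, (g x (u : ℂ)).re)
        (∫ x, (iteratedDeriv 2 (g x) (t : ℂ)).re) t := by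
  set F : (Fin n → ℝ) → ℕ → ℝ → ℝ := fun x l u => (iteratedDeriv l (g x) (u : ℂ)).re with hF
  have hd : ∀ x l (u : ℝ), HasDerivAt (F x l) (F x (l + 1) u) u :=
    fun x l u => aux_hd (g x) (hent x) l u
  have h00 : ∀ x (u : ℝ), F x 0 u = (g x (u : ℂ)).re := fun x u => by
    simp [hF]
  have h0 : ∀ x (u : ℝ), 0 < u → 0 ≤ F x 0 u := fun x u hu => by
    rw [h00]; exact hpos x u hu
  have hsgn : ∀ x, (∀ (l : ℕ) (u : ℝ), 0 < u → 0 ≤ (-1) ^ l * F x l u) ∨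
      (∀ (l : ℕ) (u : ℝ), 0 < u → 0 ≤ F x l u) := by
    intro x
    rcases hsign x with h | h
    · left; intro l u hu
      have h2 := h l u hu
      rwa [show ((-1 : ℂ) ^ l) = (((-1 : ℝ) ^ l : ℝ) : ℂ) by push_cast; ring,
        Complex.re_ofReal_mul] at h2
    · right; exact h
  have hint' : ∀ v : ℝ, 0 < v → Integrable (fun x => F x 0 v) volume := fun v hv => by
    simp only [h00]; exact hint v hv
  have hmeas : ∀ l (u : ℝ), 0 < u → AEStronglyMeasurable (fun x => F x l u) volume := by
    apply aux_meas F hd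
    intro u hu
    exact (hint' u hu).aestronglyMeasurable
  have hballIcc : ∀ s : ℝ, 0 < s → Metric.ball s (s / 2) ⊆ Set.Icc (s / 2) (3 * s / 2) := by
    intro s hs u hu
    rw [Metric.mem_ball, Real.dist_eq, abs_lt] at hu
    exact ⟨by linarith [hu.1], by linarith [hu.2]⟩
  have claim : ∀ s : ℝ, 0 < s →
      Integrable (fun x => F x 1 s) volume ∧
      HasDerivAt (fun u : ℝ => ∫ x, (g x (u : ℂ)).re) (∫ x, F x 1 s) s := by
    intro s hs
    have ha : (0 : ℝ) < s / 2 := by linarith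
    refine hasDerivAt_integral_of_dominated_loc_of_deriv_le (μ := volume)
      (F := fun (u : ℝ) x => (g x (u : ℂ)).re) (F' := fun (u : ℝ) x => F x 1 u)
      (bound := fun x => F x 0 (3 * s / 2 + 1) + 2 / (s / 2) * F x 0 (s / 2 / 2))
      (Metric.ball_mem_nhds s ha) ?_ (hint s hs) (hmeas 1 s hs) ?_ ?_ ?_
    · filter_upwards [Metric.ball_mem_nhds s ha] with u hu
      have : 0 < u := lt_of_lt_of_le ha (hballIcc s hs hu).1
      exact (hint u this).aestronglyMeasurable
    · refine Eventually.of_forall fun x => fun u hu => ?_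
      rw [Real.norm_eq_abs]
      exact (aux_key (F x) (hd x) (h0 x) (hsgn x) (a := s / 2) (b := 3 * s / 2)
        ha (by linarith)).1 u (hballIcc s hs hu)
    · exact (hint' _ (by linarith)).add ((hint' _ (by linarith)).const_mul _)
    · refine Eventually.of_forall fun x => fun u _ => ?_
      exact (hd x 0 u).congr_of_eventuallyEq
        (Eventually.of_forall fun v => (h00 x v).symm)
  intro t ht
  have ha : (0 : ℝ) < t / 2 := by linarith
  have claim2 : Integrable (fun x => F x 2 t) volume ∧
      HasDerivAt (fun u : ℝ => ∫ x, F x 1 u) (∫ x, F x 2 t) t := by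
    refine hasDerivAt_integral_of_dominated_loc_of_deriv_le (μ := volume)
      (F := fun (u : ℝ) x => F x 1 u) (F' := fun (u : ℝ) x => F x 2 u)
      (bound := fun x => F x 0 (3 * t / 2 + 2) + 8 / (t / 2 * (t / 2)) * F x 0 (t / 2 / 4))
      (Metric.ball_mem_nhds t ha) ?_ ((claim t ht).1) (hmeas 2 t ht) ?_ ?_ ?_
    · filter_upwards [Metric.ball_mem_nhds t ha] with u hu
      exact hmeas 1 u (lt_of_lt_of_le ha (hballIcc t ht hu).1)
    · refine Eventually.of_forall fun x => fun u hu => ?_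
      rw [Real.norm_eq_abs]
      exact (aux_key (F x) (hd x) (h0 x) (hsgn x) (a := t / 2) (b := 3 * t / 2)
        ha (by linarith)).2 u (hballIcc t ht hu)
    · exact (hint' _ (by linarith)).add ((hint' _ (by linarith)).const_mul _)
    · exact Eventually.of_forall fun x => fun u _ => hd x 1 u
  refine ⟨(claim t ht).2, ?_⟩
  have heq : (deriv fun u : ℝ => ∫ x, (g x (u : ℂ)).re) =ᶠ[𝓝 t]
      fun u : ℝ => ∫ x, F x 1 u := by
    filter_upwards [Metric.ball_mem_nhds t ha] with u hu
    exact ((claim u (lt_of_lt_of_le ha (hballIcc t ht hu).1)).2).deriv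
  exact claim2.2.congr_of_eventuallyEq heq
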